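/- Let p ≥ 1 and define V(x) = |x|^p/p for x ∈ ℝ. Then for all real x and y, exp( V(x) + V(y) − V(x−y) ) + exp( V(x) + V(y) − V(x+y) ) ≥ 1. -/

import Mathlib

open Real

lemma min_abs_le_max (x y : ℝ) : |x - y| ≤ max |x| |y| ∨ |x + y| ≤ max |x| |y| := by
  rcases le_total 0 x with hx | hx <;> rcases le_total 0 y with hy | hy
  · left
    rw [abs_le, abs_of_nonneg hx, abs_of_nonneg hy]
    constructor
    · have := le_max_right x y; nlinarith [le_max_right (x:ℝ) y, le_max_right x y]
    · calc x - y ≤ x := by linarith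
        _ ≤ max x y := le_max_left _ _
  · right
    rw [abs_le, abs_of_nonneg hx, abs_of_nonpos hy]
    constructor
    · calc -(max x (-y)) ≤ y := by have := le_max_right x (-y); linarith
        _ ≤ x + y := by linarith
    · calc x + y ≤ x := by linarith
        _ ≤ max x (-y) := le_max_left _ _
  · right
    rw [abs_le, abs_of_nonpos hx, abs_of_nonneg hy]
    constructor
    · calc -(max (-x) y) ≤ x := by have := le_max_left (-x) y; linarith
        _ ≤ x + y := by linarith
    · calc x + y ≤ y := by linarith
        _ ≤ max (-x) y := le_max_right _ _
  · left
    rw [abs_le, abs_of_nonpos hx, abs_of_nonpos hy]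
    constructor
    · calc -(max (-x) (-y)) ≤ x := by have := le_max_left (-x) (-y); linarith
        _ ≤ x - y := by linarith
    · calc x - y ≤ -y := by linarith
        _ ≤ max (-x) (-y) := le_max_right _ _

lemma max_rpow_le (x y p : ℝ) (hp : 0 ≤ p) :
    (max |x| |y|) ^ p ≤ |x| ^ p + |y| ^ p := by
  rcases max_cases |x| |y| with ⟨h, _⟩ | ⟨h, _⟩
  · rw [h]; nlinarith [Real.rpow_nonneg (abs_nonneg y) p]
  · rw [h]; nlinarith [Real.rpow_nonneg (abs_nonneg x) p]

/-- For `p ≥ 1` and `V(x) = |x|^p/p`, one has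
`exp(V(x)+V(y)−V(x−y)) + exp(V(x)+V(y)−V(x+y)) ≥ 1` for all real `x, y`. -/
theorem pExp_potential_inequality (p : ℝ) (hp : 1 ≤ p) (x y : ℝ) :
    1 ≤ Real.exp (|x| ^ p / p + |y| ^ p / p - |x - y| ^ p / p) +
        Real.exp (|x| ^ p / p + |y| ^ p / p - |x + y| ^ p / p) := by
  have hp0 : (0:ℝ) < p := by linarith
  have hmax := max_rpow_le x y p (by linarith)
  rcases min_abs_le_max x y with h | h
  · have h1 : |x - y| ^ p ≤ (max |x| |y|) ^ p :=
      Real.rpow_le_rpow (abs_nonneg _) h (by linarith)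
    have h2 : 0 ≤ |x| ^ p / p + |y| ^ p / p - |x - y| ^ p / p := by
      rw [← add_div, sub_nonneg, div_le_div_iff_of_pos_right hp0]
      linarith
    have := Real.one_le_exp h2
    have := Real.exp_pos (|x| ^ p / p + |y| ^ p / p - |x + y| ^ p / p)
    linarith
  · have h1 : |x + y| ^ p ≤ (max |x| |y|) ^ p :=
      Real.rpow_le_rpow (abs_nonneg _) h (by linarith)
    have h2 : 0 ≤ |x| ^ p / p + |y| ^ p / p - |x + y| ^ p / p := by
      rw [← add_div, sub_nonneg, div_le_div_iff_of_pos_right hp0]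
      linarith
    have := Real.one_le_exp h2
    have := Real.exp_pos (|x| ^ p / p + |y| ^ p / p - |x - y| ^ p / p)
    linarith
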